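/- arXiv:1506.00944 — 2 statements merged into one kernel-verified Lean document; each statement's English description precedes it below -/
import Mathlib

section
/- Let ℓ ≥ 2, let k ≥ 0 be an integer, and let G be a finite simple graph that is ℓ-partite (ℓ-colorable). Then there exists an edition set F for G with |F| ≤ k such that G+F is a K_ℓ-cluster graph if and only if there exists an edition set F for G with |F| ≤ k such that G+F is an L-cluster graph. -/
open SimpleGraph

variable {V : Type*}

/-- The graph obtained from `G` by applying the edition set `F`
(symmetric difference of the edge set with `F`). -/
def editGraph (G : SimpleGraph V) (F : Finset (Sym2 V)) : SimpleGraph V :=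
  SimpleGraph.fromEdgeSet (symmDiff G.edgeSet (F : Set (Sym2 V)))

/-- An edition set is a finite set of unordered pairs of *distinct* vertices. -/
def IsEditionSet (F : Finset (Sym2 V)) : Prop := ∀ e ∈ F, ¬ e.IsDiag

/-- `S` induces in `G` an `ℓ`-clique: a connected complete (at most) `ℓ`-partite graph,
i.e. `S` splits into at most `ℓ` independent sets with all edges present between
different parts, and the induced subgraph is connected. -/
def IsEllCliqueOn (ℓ : ℕ) (G : SimpleGraph V) (S : Set V) : Prop :=
  (G.induce S).Connected ∧
  ∃ f : V → Fin ℓ, ∀ x ∈ S, ∀ y ∈ S, x ≠ y → (G.Adj x y ↔ f x ≠ f y)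

/-- A cluster graph: every connected component is a clique. -/
def IsCluster (G : SimpleGraph V) : Prop :=
  ∀ c : G.ConnectedComponent, G.IsClique c.supp

/-- A `K_ℓ`-cluster graph: every connected component is an `ℓ`-clique. -/
def IsKlCluster (ℓ : ℕ) (G : SimpleGraph V) : Prop :=
  ∀ c : G.ConnectedComponent, IsEllCliqueOn ℓ G c.supp

/-- An `L`-cluster graph: every connected component is a clique or an `ℓ`-clique. -/
def IsLCluster (ℓ : ℕ) (G : SimpleGraph V) : Prop :=
  ∀ c : G.ConnectedComponent, G.IsClique c.supp ∨ IsEllCliqueOn ℓ G c.supp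

/-- `G` contains an induced subgraph isomorphic to `H`. -/
def Contains {W : Type*} (H : SimpleGraph W) (G : SimpleGraph V) : Prop :=
  Nonempty (H ↪g G)

/-- The paw: a triangle with a pendant vertex (the complement of `P3 ∪ K1`). -/
def paw : SimpleGraph (Fin 4) :=
  SimpleGraph.fromEdgeSet {s(0,1), s(0,2), s(1,2), s(0,3)}

/-- The complete graph on `ℓ + 2` vertices minus one edge. -/
def completeMinusEdge (ℓ : ℕ) : SimpleGraph (Fin (ℓ + 2)) where
  Adj x y := x ≠ y ∧ s(x,y) ≠ s((0 : Fin (ℓ + 2)), 1)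
  symm := ⟨by
    rintro x y ⟨h1, h2⟩
    exact ⟨h1.symm, by rwa [Sym2.eq_swap]⟩⟩
  loopless := ⟨fun x h => h.1 rfl⟩

/-- The graph `G̃` on `V × {1,…,ℓ}`: `(u,p)` is adjacent to `(v,q)` iff `p ≠ q` and
(`u = v` or `uv ∈ E(G)`). -/
def tilde (ℓ : ℕ) (G : SimpleGraph V) : SimpleGraph (V × Fin ℓ) where
  Adj a b := a.2 ≠ b.2 ∧ (a.1 = b.1 ∨ G.Adj a.1 b.1)
  symm := ⟨fun _ _ h => ⟨h.1.symm, h.2.imp Eq.symm (fun h' => h'.symm)⟩⟩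
  loopless := ⟨fun _ h => h.1 rfl⟩

/-- `x` and `y` are twins in `G`: they are distinct and every other vertex is adjacent
to `x` iff it is adjacent to `y`. -/
def IsTwinPair (G : SimpleGraph V) (x y : V) : Prop :=
  x ≠ y ∧ ∀ z, z ≠ x → z ≠ y → (G.Adj z x ↔ G.Adj z y)

/-- The twin class of a vertex. -/
def twinClass (G : SimpleGraph V) (v : V) : Set V :=
  {w | w = v ∨ IsTwinPair G v w}

/-- The set of twin classes of `G`. -/
def twinClasses (G : SimpleGraph V) : Set (Set V) :=
  Set.range (twinClass G)

/-- The number of U-vertices of `G_Q` (singleton twin classes). -/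
noncomputable def Ucount (G : SimpleGraph V) : ℕ :=
  {C ∈ twinClasses G | C.Subsingleton}.ncard

/-- The number of P-vertices of `G_Q` (twin classes of size ≥ 2 of pairwise false twins). -/
noncomputable def Pcount (G : SimpleGraph V) : ℕ :=
  {C ∈ twinClasses G | 2 ≤ C.ncard ∧ ∀ x ∈ C, ∀ y ∈ C, x ≠ y → ¬ G.Adj x y}.ncard

/-- The number of S-vertices of `G_Q` (twin classes of size ≥ 2 of pairwise true twins). -/
noncomputable def Scount (G : SimpleGraph V) : ℕ :=
  {C ∈ twinClasses G | 2 ≤ C.ncard ∧ ∀ x ∈ C, ∀ y ∈ C, x ≠ y → G.Adj x y}.ncard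

/-- The total number of twin classes of `G` (vertices of the Q-quotient graph `G_Q`). -/
noncomputable def Qcount (G : SimpleGraph V) : ℕ :=
  (twinClasses G).ncard

/-- The edition set `F̃ = { {(u,p),(v,q)} : {u,v} ∈ F, p ≠ q }` on `V × {1,…,ℓ}`. -/
def liftEdition [Fintype V] [DecidableEq V] (ℓ : ℕ) (F : Finset (Sym2 V)) :
    Finset (Sym2 (V × Fin ℓ)) :=
  Finset.univ.filter (fun e => ∃ (u v : V) (p q : Fin ℓ),
    p ≠ q ∧ s(u,v) ∈ F ∧ e = s((u,p),(v,q)))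

/-- The induced subgraph on the support of a connected component is connected. -/
lemma connected_induce_supp (G : SimpleGraph V) (c : G.ConnectedComponent) :
    (G.induce c.supp).Connected := by
  classical
  obtain ⟨v, rfl⟩ := c.exists_rep
  have hv : v ∈ (G.connectedComponentMk v).supp := by
    rw [SimpleGraph.ConnectedComponent.mem_supp_iff]
  rw [SimpleGraph.connected_iff_exists_forall_reachable]
  refine ⟨⟨v, hv⟩, ?_⟩
  rintro ⟨y, hy⟩
  replace hy : G.connectedComponentMk y = G.connectedComponentMk v := hy
  have hxy : G.Reachable v y := SimpleGraph.ConnectedComponent.exact hy.symm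
  obtain ⟨p⟩ := hxy
  have hsub : {w | w ∈ p.support} ⊆ (G.connectedComponentMk v).supp := by
    intro w hw
    rw [SimpleGraph.ConnectedComponent.mem_supp_iff]
    exact SimpleGraph.ConnectedComponent.sound ((p.takeUntil w hw).reachable.symm)
  have hconn := p.connected_induce_support
  have hr := hconn ⟨v, p.start_mem_support⟩ ⟨y, p.end_mem_support⟩
  have := hr.map (G.induceHomOfLE hsub).toHom
  exact this

lemma editGraph_edgeSet {G : SimpleGraph V} {F : Finset (Sym2 V)} (hF : IsEditionSet F) :
    (editGraph G F).edgeSet = symmDiff G.edgeSet (F : Set (Sym2 V)) := by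
  rw [editGraph, SimpleGraph.edgeSet_fromEdgeSet]
  apply sdiff_eq_self_iff_disjoint.mpr
  rw [Set.disjoint_left]
  intro e hdiag hmem
  rcases Set.mem_symmDiff.mp hmem with ⟨h, _⟩ | ⟨h, _⟩
  · exact (SimpleGraph.not_isDiag_of_mem_edgeSet G h) hdiag
  · exact (hF e h) hdiag

/-- For an `ℓ`-partite graph `G`, there is a `K_ℓ`-cluster-editing solution of size at
most `k` iff there is an `L`-cluster-editing solution of size at most `k`. -/
theorem klClusterEditing_iff_lClusterEditing [Fintype V] (ℓ k : ℕ) (hℓ : 2 ≤ ℓ)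
    (G : SimpleGraph V) (hcol : G.Colorable ℓ) :
    (∃ F : Finset (Sym2 V), IsEditionSet F ∧ F.card ≤ k ∧
      IsKlCluster ℓ (editGraph G F)) ↔
    (∃ F : Finset (Sym2 V), IsEditionSet F ∧ F.card ≤ k ∧
      IsLCluster ℓ (editGraph G F)) := by
  constructor
  · rintro ⟨F, h1, h2, h3⟩
    exact ⟨F, h1, h2, fun c => Or.inr (h3 c)⟩
  · rintro ⟨F, hF, hcard, hL⟩
    classical
    set H : SimpleGraph V := editGraph G F with hHdef
    obtain ⟨c⟩ := hcol
    set bad : H.ConnectedComponent → Prop :=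
      fun comp => ¬ IsEllCliqueOn ℓ H comp.supp with hbaddef
    set H' : SimpleGraph V :=
      { Adj := fun x y => H.Adj x y ∧ ¬(c x = c y ∧ bad (H.connectedComponentMk x))
        symm := ⟨by
          rintro x y ⟨hxy, hc⟩
          refine ⟨hxy.symm, ?_⟩
          rw [SimpleGraph.ConnectedComponent.connectedComponentMk_eq_of_adj hxy.symm]
          rintro ⟨hcc, hb⟩
          exact hc ⟨hcc.symm, hb⟩⟩
        loopless := ⟨fun x h => H.loopless.1 x h.1⟩ } with hH'def
    have hle : H' ≤ H := fun {x y} h => h.1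
    have hEH : H.edgeSet = symmDiff G.edgeSet (F : Set (Sym2 V)) := editGraph_edgeSet hF
    have hsub : symmDiff G.edgeSet H'.edgeSet ⊆ (F : Set (Sym2 V)) := by
      intro e he
      induction e with
      | _ x y =>
        rcases Set.mem_symmDiff.mp he with ⟨heG, heH'⟩ | ⟨heH', heG⟩
        · -- e ∈ E(G), e ∉ E(H')
          have hGxy : G.Adj x y := (SimpleGraph.mem_edgeSet G).mp heG
          have hcne : c x ≠ c y := c.valid hGxy
          have heH : s(x, y) ∉ H.edgeSet := by
            intro hmem
            exact heH' ((SimpleGraph.mem_edgeSet H').mpr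
              ⟨(SimpleGraph.mem_edgeSet H).mp hmem, fun h => hcne h.1⟩)
          rw [hEH] at heH
          by_contra hne
          exact heH (Set.mem_symmDiff.mpr (Or.inl ⟨heG, hne⟩))
        · -- e ∈ E(H'), e ∉ E(G)
          have heH : s(x, y) ∈ H.edgeSet :=
            (SimpleGraph.mem_edgeSet H).mpr (hle ((SimpleGraph.mem_edgeSet H').mp heH'))
          rw [hEH] at heH
          rcases Set.mem_symmDiff.mp heH with ⟨h1, _⟩ | ⟨h1, _⟩
          · exact absurd h1 heG
          · exact h1
    set F' : Finset (Sym2 V) :=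
      F.filter (fun e => e ∈ symmDiff G.edgeSet H'.edgeSet) with hF'def
    have hF'coe : (F' : Set (Sym2 V)) = symmDiff G.edgeSet H'.edgeSet := by
      ext e
      simp only [hF'def, Finset.coe_filter, Set.mem_setOf_eq, Finset.mem_coe]
      exact ⟨fun h => h.2, fun h => ⟨hsub h, h⟩⟩
    have hedit : editGraph G F' = H' := by
      rw [editGraph, hF'coe, symmDiff_symmDiff_cancel_left, SimpleGraph.fromEdgeSet_edgeSet]
    refine ⟨F', fun e he => hF e (Finset.filter_subset _ _ he),
      le_trans (Finset.card_le_card (Finset.filter_subset _ _)) hcard, ?_⟩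
    rw [hedit]
    intro comp'
    obtain ⟨v, rfl⟩ := comp'.exists_rep
    have hsupp : (H'.connectedComponentMk v).supp ⊆ (H.connectedComponentMk v).supp := by
      intro x hx
      rw [SimpleGraph.ConnectedComponent.mem_supp_iff] at hx ⊢
      exact SimpleGraph.ConnectedComponent.sound
        ((SimpleGraph.ConnectedComponent.exact hx).mono hle)
    refine ⟨connected_induce_supp H' _, ?_⟩
    by_cases hbad : bad (H.connectedComponentMk v)
    · -- the H-component is a clique; recolor it
      have hclique : H.IsClique (H.connectedComponentMk v).supp :=
        (hL (H.connectedComponentMk v)).resolve_right hbad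
      refine ⟨fun w => c w, fun x hx y hy hxy => ?_⟩
      have hxC := hsupp hx
      have hyC := hsupp hy
      have hmkx : H.connectedComponentMk x = H.connectedComponentMk v :=
        (SimpleGraph.ConnectedComponent.mem_supp_iff _ _).mp hxC
      constructor
      · rintro ⟨_, hnc⟩ hceq
        exact hnc ⟨hceq, by rw [hmkx]; exact hbad⟩
      · intro hcne
        exact ⟨hclique hxC hyC hxy, fun h => hcne h.1⟩
    · -- the H-component is an ℓ-clique; keep its coloring
      have hell : IsEllCliqueOn ℓ H (H.connectedComponentMk v).supp := not_not.mp hbad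
      obtain ⟨_, f, hf⟩ := hell
      refine ⟨f, fun x hx y hy hxy => ?_⟩
      have hxC := hsupp hx
      have hyC := hsupp hy
      have hmkx : H.connectedComponentMk x = H.connectedComponentMk v :=
        (SimpleGraph.ConnectedComponent.mem_supp_iff _ _).mp hxC
      rw [← hf x hxC y hyC hxy]
      exact ⟨fun h => h.1, fun h => ⟨h, fun hc => (hmkx ▸ hbad) hc.2⟩⟩
end

section
/- Let ℓ ≥ 2 and let G be a finite simple graph none of whose connected components is a clique or an ℓ-clique. If there exists an edition set F for G with |F| = 1 such that G+F is an L-cluster graph, then Q(G) ≤ 2ℓ+2, P(G) ≤ 2ℓ, and S(G) ≤ 2. -/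
open SimpleGraph

variable {V : Type*}

section MyAux

open Classical

variable {V : Type*}

lemma myTwin_symm {G : SimpleGraph V} {x y : V} (h : IsTwinPair G x y) : IsTwinPair G y x :=
  ⟨h.1.symm, fun z h1 h2 => (h.2 z h2 h1).symm⟩

lemma myTwin_trans {G : SimpleGraph V} {x y z : V} (h1 : IsTwinPair G x y)
    (h2 : IsTwinPair G y z) (hxz : x ≠ z) : IsTwinPair G x z := by
  refine ⟨hxz, fun w hw1 hw2 => ?_⟩
  by_cases hwy : w = y
  · subst hwy
    have e1 : G.Adj w x ↔ G.Adj x w := G.adj_comm w x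
    have e2 : G.Adj x w ↔ G.Adj x z := h2.2 x h1.1 hxz
    have e3 : G.Adj x z ↔ G.Adj z x := G.adj_comm x z
    have e4 : G.Adj z x ↔ G.Adj z w := h1.2 z hxz.symm h2.1.symm
    have e5 : G.Adj z w ↔ G.Adj w z := G.adj_comm z w
    exact e1.trans (e2.trans (e3.trans (e4.trans e5)))
  · exact (h1.2 w hw1 hwy).trans (h2.2 w hwy hw2)

lemma mem_twinClass_iff {G : SimpleGraph V} {v w : V} :
    w ∈ twinClass G v ↔ w = v ∨ IsTwinPair G v w := Iff.rfl

lemma mem_twinClass_self (G : SimpleGraph V) (v : V) : v ∈ twinClass G v := Or.inl rfl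

lemma twinClass_eq_of_mem {G : SimpleGraph V} {v w : V} (h : w ∈ twinClass G v) :
    twinClass G w = twinClass G v := by
  rcases h with rfl | h
  · rfl
  · ext u
    simp only [mem_twinClass_iff]
    constructor
    · rintro (rfl | hu)
      · exact Or.inr h
      · by_cases huv : u = v
        · exact Or.inl huv
        · exact Or.inr (myTwin_trans h hu (fun e => huv e.symm))
    · rintro (rfl | hu)
      · exact Or.inr (myTwin_symm h)
      · by_cases huw : u = w
        · exact Or.inl huw
        · exact Or.inr (myTwin_trans (myTwin_symm h) hu (fun e => huw e.symm))

lemma twinClasses_eq_of_mem {G : SimpleGraph V} {C : Set V} (hC : C ∈ twinClasses G)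
    {x : V} (hx : x ∈ C) : C = twinClass G x := by
  obtain ⟨v, rfl⟩ := hC
  exact (twinClass_eq_of_mem hx).symm

lemma mem_of_twinPair {G : SimpleGraph V} {x y : V} (h : IsTwinPair G x y) :
    y ∈ twinClass G x := Or.inr h

/-- counting: if `g` factors through `f` on `s`, the image of `g` is no bigger. -/
lemma ncard_image_le_of_factor {α β γ : Type*} {s : Set α} (hs : s.Finite)
    (f : α → β) (g : α → γ)
    (h : ∀ x ∈ s, ∀ y ∈ s, f x = f y → g x = g y) :
    (g '' s).ncard ≤ (f '' s).ncard := by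
  classical
  by_cases hne : s.Nonempty
  · obtain ⟨x0, hx0⟩ := hne
    set F : β → γ := fun p => if hp : ∃ x ∈ s, f x = p then g hp.choose else g x0 with hF
    have himg : g '' s = F '' (f '' s) := by
      ext c
      constructor
      · rintro ⟨x, hx, rfl⟩
        refine ⟨f x, ⟨x, hx, rfl⟩, ?_⟩
        have hp : ∃ y ∈ s, f y = f x := ⟨x, hx, rfl⟩
        simp only [hF, dif_pos hp]
        exact h _ hp.choose_spec.1 _ hx hp.choose_spec.2
      · rintro ⟨p, ⟨x, hx, rfl⟩, rfl⟩
        have hp : ∃ y ∈ s, f y = f x := ⟨x, hx, rfl⟩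
        simp only [hF, dif_pos hp]
        exact ⟨hp.choose, hp.choose_spec.1, rfl⟩
    rw [himg]
    exact Set.ncard_image_le (hs.image f)
  · rw [Set.not_nonempty_iff_eq_empty] at hne
    simp [hne]

lemma reach_closed {G : SimpleGraph V} {S : Set V}
    (hS : ∀ u ∈ S, ∀ w, G.Adj u w → w ∈ S) :
    ∀ {x y : V}, x ∈ S → G.Reachable x y → y ∈ S := by
  suffices h : ∀ (x y : V) (w : G.Walk x y), x ∈ S → y ∈ S by
    intro x y hx hr
    obtain ⟨w⟩ := hr
    exact h x y w hx
  intro x y w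
  induction w with
  | nil => exact id
  | cons h' p ih => exact fun hx => ih (hS _ hx _ h')

end MyAux
section MyAux2

variable {V : Type*}

lemma sym2_ne_of_notmem {x y a b : V} (hx1 : x ≠ a) (hx2 : x ≠ b) :
    s(x, y) ≠ s(a, b) := by
  intro h
  rw [Sym2.eq_iff] at h
  rcases h with ⟨rfl, rfl⟩ | ⟨rfl, rfl⟩
  · exact hx1 rfl
  · exact hx2 rfl

lemma twinPair_transfer {G H : SimpleGraph V} {a b : V}
    (hGH : ∀ x y : V, s(x, y) ≠ s(a, b) → (G.Adj x y ↔ H.Adj x y))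
    {x y : V} (hx1 : x ≠ a) (hx2 : x ≠ b) (hy1 : y ≠ a) (hy2 : y ≠ b) :
    IsTwinPair G x y ↔ IsTwinPair H x y := by
  have key : ∀ z : V, (G.Adj z x ↔ H.Adj z x) := by
    intro z
    rw [G.adj_comm, H.adj_comm]
    exact hGH x z (sym2_ne_of_notmem hx1 hx2)
  have key' : ∀ z : V, (G.Adj z y ↔ H.Adj z y) := by
    intro z
    rw [G.adj_comm, H.adj_comm]
    exact hGH y z (sym2_ne_of_notmem hy1 hy2)
  constructor
  · rintro ⟨hne, h⟩
    exact ⟨hne, fun z h1 h2 => ((key z).symm.trans (h z h1 h2)).trans (key' z)⟩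
  · rintro ⟨hne, h⟩
    exact ⟨hne, fun z h1 h2 => ((key z).trans (h z h1 h2)).trans (key' z).symm⟩

lemma adj_mem_supp {H : SimpleGraph V} {c : H.ConnectedComponent} {x z : V}
    (hx : x ∈ c.supp) (h : H.Adj z x) : z ∈ c.supp := by
  rw [SimpleGraph.ConnectedComponent.mem_supp_iff] at hx ⊢
  rw [← hx]
  exact SimpleGraph.ConnectedComponent.sound h.reachable

lemma not_adj_of_not_mem_supp {H : SimpleGraph V} {c : H.ConnectedComponent} {x z : V}
    (hx : x ∈ c.supp) (hz : z ∉ c.supp) : ¬ H.Adj z x :=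
  fun h => hz (adj_mem_supp hx h)

/-- at most `ℓ` twin classes have a representative in a clique-or-ℓ-clique component. -/
lemma classes_in_comp_le [Fintype V] {H : SimpleGraph V} {ℓ : ℕ} (hℓ : 1 ≤ ℓ)
    (c : H.ConnectedComponent)
    (hc : H.IsClique c.supp ∨ IsEllCliqueOn ℓ H c.supp) :
    (twinClass H '' c.supp).ncard ≤ ℓ := by
  rcases hc with hcl | ⟨_, f, hf⟩
  · have hsub : (twinClass H '' c.supp).Subsingleton := by
      rintro _ ⟨x, hx, rfl⟩ _ ⟨y, hy, rfl⟩
      by_cases hxy : x = y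
      · rw [hxy]
      · refine (twinClass_eq_of_mem (mem_of_twinPair ⟨hxy, fun z h1 h2 => ?_⟩)).symm
        by_cases hz : z ∈ c.supp
        · exact iff_of_true (hcl hz hx h1) (hcl hz hy h2)
        · exact iff_of_false (not_adj_of_not_mem_supp hx hz) (not_adj_of_not_mem_supp hy hz)
    calc (twinClass H '' c.supp).ncard ≤ 1 :=
          (Set.ncard_le_one (Set.toFinite _)).2 (fun a ha b hb => hsub ha hb)
    _ ≤ ℓ := hℓ
  · have h1 : (twinClass H '' c.supp).ncard ≤ (f '' c.supp).ncard := by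
      refine ncard_image_le_of_factor (Set.toFinite _) f (twinClass H) ?_
      intro x hx y hy hfxy
      by_cases hxy : x = y
      · rw [hxy]
      · refine (twinClass_eq_of_mem (mem_of_twinPair ⟨hxy, fun z h1 h2 => ?_⟩)).symm
        by_cases hz : z ∈ c.supp
        · rw [hf z hz x hx h1, hf z hz y hy h2, hfxy]
        · exact iff_of_false (not_adj_of_not_mem_supp hx hz) (not_adj_of_not_mem_supp hy hz)
    refine h1.trans ?_
    calc (f '' c.supp).ncard ≤ (Set.univ : Set (Fin ℓ)).ncard :=
          Set.ncard_le_ncard (Set.subset_univ _) (Set.toFinite _)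
    _ = ℓ := by rw [Set.ncard_univ, Nat.card_eq_fintype_card, Fintype.card_fin]

/-- two twin classes of `H` containing an adjacent twin pair, with representatives in the
same component, coincide. -/
lemma true_class_unique {V : Type*} {H : SimpleGraph V} {ℓ : ℕ} (hH : IsLCluster ℓ H)
    {x1 y1 x2 y2 : V}
    (h1 : IsTwinPair H x1 y1) (ha1 : H.Adj x1 y1)
    (h2 : IsTwinPair H x2 y2) (ha2 : H.Adj x2 y2)
    (hcomp : H.connectedComponentMk x1 = H.connectedComponentMk x2) :
    twinClass H x1 = twinClass H x2 := by
  set c := H.connectedComponentMk x1 with hc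
  have hx1 : x1 ∈ c.supp := rfl
  have hx2 : x2 ∈ c.supp := hcomp.symm
  have hy1 : y1 ∈ c.supp := adj_mem_supp hx1 ha1.symm
  have hy2 : y2 ∈ c.supp := adj_mem_supp hx2 ha2.symm
  rcases hH c with hcl | ⟨_, f, hf⟩
  · by_cases hxy : x1 = x2
    · rw [hxy]
    · refine (twinClass_eq_of_mem (mem_of_twinPair ⟨hxy, fun z hz1 hz2 => ?_⟩)).symm
      by_cases hz : z ∈ c.supp
      · exact iff_of_true (hcl hz hx1 hz1) (hcl hz hx2 hz2)
      · exact iff_of_false (not_adj_of_not_mem_supp hx1 hz) (not_adj_of_not_mem_supp hx2 hz)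
  · have hsing : ∀ (x y : V), x ∈ c.supp → y ∈ c.supp → IsTwinPair H x y → H.Adj x y →
        ∀ w ∈ c.supp, f w = f x → w = x := by
      intro x y hx hy htw hadj w hw hfw
      by_contra hwx
      have hnadj : ¬ H.Adj w x := by
        intro h
        exact (hf w hw x hx hwx).1 h hfw
      by_cases hwy : w = y
      · subst hwy
        exact ((hf x hx w hw (fun e => hwx e.symm)).1 hadj) (hfw.symm)
      · have : H.Adj w y := by
          refine (hf w hw y hy hwy).2 ?_
          rw [hfw]
          exact (hf x hx y hy (H.ne_of_adj hadj)).1 hadj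
        exact hnadj ((htw.2 w (hwx) hwy).2 this)
    have hs1 := hsing x1 y1 hx1 hy1 h1 ha1
    have hs2 := hsing x2 y2 hx2 hy2 h2 ha2
    by_cases hfx : f x1 = f x2
    · rw [hs2 x1 hx1 hfx]
    · have hxy : x1 ≠ x2 := fun e => hfx (by rw [e])
      refine (twinClass_eq_of_mem (mem_of_twinPair ⟨hxy, fun z hz1 hz2 => ?_⟩)).symm
      by_cases hz : z ∈ c.supp
      · have hz1' : f z ≠ f x1 := fun e => hz1 (hs1 z hz e)
        have hz2' : f z ≠ f x2 := fun e => hz2 (hs2 z hz e)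
        exact iff_of_true ((hf z hz x1 hx1 hz1).2 hz1') ((hf z hz x2 hx2 hz2).2 hz2')
      · exact iff_of_false (not_adj_of_not_mem_supp hx1 hz) (not_adj_of_not_mem_supp hx2 hz)

end MyAux2
section MyAux3

open SimpleGraph

variable {V : Type*}

/-- every component of the edited graph contains `a` or `b`. -/
lemma comp_has_ab {G H : SimpleGraph V} {ℓ : ℕ} {a b : V}
    (hGH : ∀ x y : V, s(x, y) ≠ s(a, b) → (G.Adj x y ↔ H.Adj x y))
    (hG : ∀ c : G.ConnectedComponent, ¬ (G.IsClique c.supp ∨ IsEllCliqueOn ℓ G c.supp))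
    (hH : IsLCluster ℓ H) :
    ∀ c : H.ConnectedComponent, a ∈ c.supp ∨ b ∈ c.supp := by
  intro c
  by_contra hcon
  push_neg at hcon
  obtain ⟨ha, hb⟩ := hcon
  obtain ⟨x, hx⟩ := c.exists_rep
  have hxS : x ∈ c.supp := (SimpleGraph.ConnectedComponent.mem_supp_iff _ _).2 hx
  have hne : ∀ u ∈ c.supp, u ≠ a ∧ u ≠ b := by
    intro u hu
    exact ⟨fun e => ha (e ▸ hu), fun e => hb (e ▸ hu)⟩
  have hadjGH : ∀ u ∈ c.supp, ∀ w : V, (G.Adj u w ↔ H.Adj u w) := by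
    intro u hu w
    exact hGH u w (sym2_ne_of_notmem (hne u hu).1 (hne u hu).2)
  have hclG : ∀ u ∈ c.supp, ∀ w, G.Adj u w → w ∈ c.supp := by
    intro u hu w hw
    exact adj_mem_supp hu ((hadjGH u hu w).1 hw).symm
  set cg := G.connectedComponentMk x with hcg
  have hsupp : cg.supp = c.supp := by
    ext y
    constructor
    · intro hy
      have hyx : G.Reachable x y := by
        have := (SimpleGraph.ConnectedComponent.mem_supp_iff _ _).1 hy
        exact (SimpleGraph.ConnectedComponent.exact this).symm
      exact reach_closed hclG hxS hyx
    · intro hy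
      have hxy : H.Reachable x y := by
        have := (SimpleGraph.ConnectedComponent.mem_supp_iff _ _).1 hy
        exact SimpleGraph.ConnectedComponent.exact (hx.trans this.symm)
      have hcl : ∀ u ∈ {z | z ∈ c.supp ∧ G.Reachable x z}, ∀ w, H.Adj u w →
          w ∈ {z | z ∈ c.supp ∧ G.Reachable x z} := by
        intro u hu w hw
        have hwS : w ∈ c.supp := adj_mem_supp hu.1 hw.symm
        exact ⟨hwS, hu.2.trans ((hadjGH u hu.1 w).2 hw).reachable⟩
      have : y ∈ {z | z ∈ c.supp ∧ G.Reachable x z} :=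
        reach_closed hcl ⟨hxS, SimpleGraph.Reachable.refl x⟩ hxy
      rw [(SimpleGraph.ConnectedComponent.mem_supp_iff _ _)]
      exact SimpleGraph.ConnectedComponent.sound this.2.symm
  refine hG cg ?_
  rcases hH c with hcl | ⟨hconn, f, hf⟩
  · left
    rw [hsupp]
    intro u hu v hv huv
    exact (hadjGH u hu v).2 (hcl hu hv huv)
  · right
    rw [hsupp]
    have hind : G.induce c.supp = H.induce c.supp := by
      ext ⟨u, hu⟩ ⟨v, hv⟩
      simp only [SimpleGraph.comap_adj, Function.Embedding.coe_subtype]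
      exact hadjGH u hu v
    refine ⟨by rw [hind]; exact hconn, f, fun u hu v hv huv => ?_⟩
    exact (hadjGH u hu v).trans (hf u hu v hv huv)

lemma supp_univ {H : SimpleGraph V} {a b : V}
    (hcompAB : ∀ c : H.ConnectedComponent, a ∈ c.supp ∨ b ∈ c.supp)
    (hmk : H.connectedComponentMk a = H.connectedComponentMk b) :
    ∀ v, v ∈ (H.connectedComponentMk a).supp := by
  intro v
  rw [(SimpleGraph.ConnectedComponent.mem_supp_iff _ _)]
  rcases hcompAB (H.connectedComponentMk v) with h | h
  · exact ((SimpleGraph.ConnectedComponent.mem_supp_iff _ _).1 h).symm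
  · exact ((SimpleGraph.ConnectedComponent.mem_supp_iff _ _).1 h).symm.trans hmk.symm

/-- if `a,b` are in the same component and non-adjacent in `H`, they are twins in `G`. -/
lemma twin_ab {G H : SimpleGraph V} {ℓ : ℕ} {a b : V} (hab : a ≠ b)
    (hGH : ∀ x y : V, s(x, y) ≠ s(a, b) → (G.Adj x y ↔ H.Adj x y))
    (hH : IsLCluster ℓ H)
    (hcompAB : ∀ c : H.ConnectedComponent, a ∈ c.supp ∨ b ∈ c.supp)
    (hmk : H.connectedComponentMk a = H.connectedComponentMk b)
    (hnadjH : ¬ H.Adj a b) : IsTwinPair G a b := by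
  have hall := supp_univ hcompAB hmk
  rcases hH (H.connectedComponentMk a) with hcl | ⟨_, f, hf⟩
  · exact absurd (hcl (hall a) (hall b) hab) hnadjH
  · have hfab : f a = f b := by
      have := hf a (hall a) b (hall b) hab
      rw [this] at hnadjH
      exact not_ne_iff.1 hnadjH
    refine ⟨hab, fun z h1 h2 => ?_⟩
    have e1 : G.Adj z a ↔ H.Adj z a := hGH z a (sym2_ne_of_notmem h1 h2)
    have e2 : G.Adj z b ↔ H.Adj z b := hGH z b (sym2_ne_of_notmem h1 h2)
    rw [e1, e2, hf z (hall z) a (hall a) h1, hf z (hall z) b (hall b) h2, hfab]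

end MyAux3
section MyAux4

open SimpleGraph

variable {V : Type*}

lemma no_two_pendant {G H : SimpleGraph V} {ℓ : ℕ} {a b : V}
    (hGH : ∀ x y : V, s(x, y) ≠ s(a, b) → (G.Adj x y ↔ H.Adj x y))
    (hflip : H.Adj a b ↔ ¬ G.Adj a b)
    (hH : IsLCluster ℓ H)
    (hcompAB : ∀ c : H.ConnectedComponent, a ∈ c.supp ∨ b ∈ c.supp)
    {x y : V} (hxa : x ≠ a) (hxb : x ≠ b) (hya : y ≠ a) (hyb : y ≠ b) (hxy : x ≠ y)
    (hnadj : ¬ G.Adj a b) (htwx : IsTwinPair G x a)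
    (hadjx : G.Adj x a) (hnbx : ¬ G.Adj b x)
    (htwy : IsTwinPair G y b) (hadjy : G.Adj y b) (hnay : ¬ G.Adj a y) : False := by
  have hHab : H.Adj a b := hflip.2 hnadj
  have hmk : H.connectedComponentMk a = H.connectedComponentMk b :=
    SimpleGraph.ConnectedComponent.sound hHab.reachable
  have hall := supp_univ hcompAB hmk
  have hnHxb : ¬ H.Adj x b := by
    rw [← hGH x b (sym2_ne_of_notmem hxa hxb)]
    rw [G.adj_comm]
    exact hnbx
  have hHxa : H.Adj x a := (hGH x a (sym2_ne_of_notmem hxa hxb)).1 hadjx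
  rcases hH (H.connectedComponentMk a) with hcl | ⟨_, f, hf⟩
  · exact hnHxb (hcl (hall x) (hall b) hxb)
  · have hfxb : f x = f b := by
      have := hf x (hall x) b (hall b) hxb
      rw [this] at hnHxb
      exact not_ne_iff.1 hnHxb
    have hfxa : f x ≠ f a := (hf x (hall x) a (hall a) hxa).1 hHxa
    have hnHya : ¬ H.Adj y a := by
      rw [← hGH y a (sym2_ne_of_notmem hya hyb)]
      rw [G.adj_comm]
      exact hnay
    have hfya : f y = f a := by
      have := hf y (hall y) a (hall a) hya
      rw [this] at hnHya
      exact not_ne_iff.1 hnHya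
    have h1 : G.Adj y x ↔ G.Adj y a := htwx.2 y hxy.symm hya
    have h2 : G.Adj y x := by
      rw [hGH y x (sym2_ne_of_notmem hya hyb)]
      refine (hf y (hall y) x (hall x) hxy.symm).2 ?_
      rw [hfya]
      exact fun e => hfxa e.symm
    rw [G.adj_comm y a] at h1
    exact hnay (h1.1 h2)

lemma E1 {G H : SimpleGraph V} {ℓ : ℕ} {a b : V} [Fintype V] (hab : a ≠ b)
    (hGH : ∀ x y : V, s(x, y) ≠ s(a, b) → (G.Adj x y ↔ H.Adj x y))
    (hflip : H.Adj a b ↔ ¬ G.Adj a b)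
    (hG : ∀ c : G.ConnectedComponent, ¬ (G.IsClique c.supp ∨ IsEllCliqueOn ℓ G c.supp))
    (hH : IsLCluster ℓ H)
    (hcompAB : ∀ c : H.ConnectedComponent, a ∈ c.supp ∨ b ∈ c.supp)
    {C : Set V} (hCcls : C ∈ twinClasses G) (hC2 : 2 ≤ C.ncard)
    (hCadj : ∀ x ∈ C, ∀ y ∈ C, x ≠ y → G.Adj x y) (haC : a ∈ C) :
    H.connectedComponentMk a = H.connectedComponentMk b ∧
      (b ∈ C ∨ (¬ G.Adj a b ∧ ∃ x, x ∈ C ∧ x ≠ a ∧ x ≠ b ∧ IsTwinPair G x a ∧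
        G.Adj x a ∧ ¬ G.Adj b x)) := by
  have hCa : C = twinClass G a := twinClasses_eq_of_mem hCcls haC
  by_cases hbC : b ∈ C
  · have htwab : IsTwinPair G a b := by
      rw [hCa] at hbC
      rcases hbC with rfl | h
      · exact absurd rfl hab
      · exact h
    have hGab : G.Adj a b := hCadj a haC b hbC hab
    refine ⟨?_, Or.inl hbC⟩
    by_cases hz : ∃ z, z ≠ a ∧ z ≠ b ∧ G.Adj z a
    · obtain ⟨z, hz1, hz2, hza⟩ := hz
      have hzb : G.Adj z b := (htwab.2 z hz1 hz2).1 hza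
      have h1 : H.Adj z a := (hGH z a (sym2_ne_of_notmem hz1 hz2)).1 hza
      have h2 : H.Adj z b := (hGH z b (sym2_ne_of_notmem hz1 hz2)).1 hzb
      exact (SimpleGraph.ConnectedComponent.sound h1.symm.reachable).trans
        (SimpleGraph.ConnectedComponent.sound h2.reachable)
    · exfalso
      push_neg at hz
      have hS : ∀ u ∈ ({a, b} : Set V), ∀ w, G.Adj u w → w ∈ ({a, b} : Set V) := by
        rintro u (rfl | rfl) w hw
        · by_cases hwb : w = b
          · exact Or.inr hwb
          · exact absurd hw.symm (hz w (fun e => (G.ne_of_adj hw) e.symm) hwb)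
        · by_cases hwa : w = a
          · exact Or.inl hwa
          · have hwu : w ≠ u := fun e => (G.ne_of_adj hw) e.symm
            have : G.Adj w a := (htwab.2 w hwa hwu).2 hw.symm
            exact absurd this (hz w hwa hwu)
      have hsupp : (G.connectedComponentMk a).supp ⊆ ({a, b} : Set V) := by
        intro v hv
        have : G.Reachable a v := SimpleGraph.ConnectedComponent.exact
          ((SimpleGraph.ConnectedComponent.mem_supp_iff _ _).1 hv).symm
        exact reach_closed hS (Or.inl rfl) this
      refine hG (G.connectedComponentMk a) (Or.inl ?_)
      intro u hu v hv huv
      rcases hsupp hu with rfl | rfl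
      · rcases hsupp hv with rfl | rfl
        · exact absurd rfl huv
        · exact hGab
      · rcases hsupp hv with rfl | rfl
        · exact hGab.symm
        · exact absurd rfl huv
  · obtain ⟨w, hwC, hwa⟩ := Set.exists_ne_of_one_lt_ncard (by omega : 1 < C.ncard) a
    have hwb : w ≠ b := fun e => hbC (e ▸ hwC)
    have htw : IsTwinPair G w a := by
      have : w ∈ twinClass G a := hCa ▸ hwC
      rcases this with rfl | h
      · exact absurd rfl hwa
      · exact myTwin_symm h
    have hGwa : G.Adj w a := hCadj w hwC a haC hwa
    have hkey : G.Adj b w ↔ G.Adj a b := by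
      have := htw.2 b hwb.symm hab.symm
      rw [G.adj_comm b a] at this
      exact this
    by_cases hGab : G.Adj a b
    · exfalso
      have hbw : G.Adj b w := hkey.2 hGab
      have h1 : H.Adj w a := (hGH w a (sym2_ne_of_notmem hwa hwb)).1 hGwa
      have h2 : H.Adj w b := (hGH w b (sym2_ne_of_notmem hwa hwb)).1 hbw.symm
      have hmk : H.connectedComponentMk a = H.connectedComponentMk b :=
        (SimpleGraph.ConnectedComponent.sound h1.symm.reachable).trans
          (SimpleGraph.ConnectedComponent.sound h2.reachable)
      have hnadjH : ¬ H.Adj a b := fun h => (hflip.1 h) hGab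
      have htwab := twin_ab hab hGH hH hcompAB hmk hnadjH
      exact hbC (hCa ▸ mem_of_twinPair htwab)
    · have hbw : ¬ G.Adj b w := fun h => hGab (hkey.1 h)
      have hHab : H.Adj a b := hflip.2 hGab
      exact ⟨SimpleGraph.ConnectedComponent.sound hHab.reachable,
        Or.inr ⟨hGab, w, hwC, hwa, hwb, htw, hGwa, hbw⟩⟩

end MyAux4
section MyAux5

open SimpleGraph

variable {V : Type*}

lemma editGraph_singleton_adj_of_ne {G : SimpleGraph V} {a b x y : V} (h : s(x,y) ≠ s(a,b)) :
    ((editGraph G {s(a,b)}).Adj x y ↔ G.Adj x y) := by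
  rw [editGraph, SimpleGraph.fromEdgeSet_adj]
  constructor
  · rintro ⟨hm, hxy⟩
    rw [Set.mem_symmDiff] at hm
    rcases hm with ⟨he, _⟩ | ⟨hf, _⟩
    · exact (SimpleGraph.mem_edgeSet _).1 he
    · simp only [Finset.coe_singleton, Set.mem_singleton_iff] at hf
      exact absurd hf h
  · intro hA
    refine ⟨Set.mem_symmDiff.2 (Or.inl ⟨(SimpleGraph.mem_edgeSet _).2 hA, ?_⟩), hA.ne⟩
    simp only [Finset.coe_singleton, Set.mem_singleton_iff]
    exact h

lemma editGraph_singleton_adj_flip {G : SimpleGraph V} {a b : V} (hab : a ≠ b) :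
    ((editGraph G {s(a,b)}).Adj a b ↔ ¬ G.Adj a b) := by
  rw [editGraph, SimpleGraph.fromEdgeSet_adj]
  constructor
  · rintro ⟨hm, _⟩
    rw [Set.mem_symmDiff] at hm
    rcases hm with ⟨_, hne⟩ | ⟨_, hne⟩
    · exfalso
      apply hne
      simp
    · exact fun hA => hne ((SimpleGraph.mem_edgeSet _).2 hA)
  · intro h
    refine ⟨Set.mem_symmDiff.2 (Or.inr ⟨by simp, fun he => h ((SimpleGraph.mem_edgeSet _).1 he)⟩), hab⟩

end MyAux5
/-- Lemma 5: if `G` has no clique or `ℓ`-clique component and one edge edition turns it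
into an `L`-cluster graph, then `Q(G) ≤ 2ℓ+2`, `P(G) ≤ 2ℓ` and `S(G) ≤ 2`. -/
theorem one_edition_kernel_bounds [Fintype V] (ℓ : ℕ) (hℓ : 2 ≤ ℓ) (G : SimpleGraph V)
    (hG : ∀ c : G.ConnectedComponent,
      ¬ (G.IsClique c.supp ∨ IsEllCliqueOn ℓ G c.supp))
    (hex : ∃ F : Finset (Sym2 V), IsEditionSet F ∧ F.card = 1 ∧
      IsLCluster ℓ (editGraph G F)) :
    Qcount G ≤ 2 * ℓ + 2 ∧ Pcount G ≤ 2 * ℓ ∧ Scount G ≤ 2 := by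
  classical
  obtain ⟨F, hFed, hFcard, hL⟩ := hex
  obtain ⟨e, rfl⟩ := Finset.card_eq_one.1 hFcard
  have he : ∃ a b : V, e = s(a, b) := by
    induction e using Sym2.ind with
    | _ x y => exact ⟨x, y, rfl⟩
  obtain ⟨a, b, rfl⟩ := he
  have hab : a ≠ b := by
    intro h
    exact hFed s(a, b) (Finset.mem_singleton_self _) (Sym2.mk_isDiag_iff.2 h)
  set H := editGraph G {s(a, b)} with hHdef
  have hGH : ∀ x y : V, s(x, y) ≠ s(a, b) → (G.Adj x y ↔ H.Adj x y) :=
    fun x y h => (editGraph_singleton_adj_of_ne h).symm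
  have hflip : H.Adj a b ↔ ¬ G.Adj a b := editGraph_singleton_adj_flip hab
  have hcompAB : ∀ c : H.ConnectedComponent, a ∈ c.supp ∨ b ∈ c.supp :=
    comp_has_ab hGH hG hL
  have hGH' : ∀ x y : V, s(x, y) ≠ s(b, a) → (G.Adj x y ↔ H.Adj x y) :=
    fun x y h => hGH x y (fun hh => h (hh.trans (Sym2.eq_swap)))
  have hflip' : H.Adj b a ↔ ¬ G.Adj b a := by
    rw [H.adj_comm, G.adj_comm]
    exact hflip
  have hcompAB' : ∀ c : H.ConnectedComponent, b ∈ c.supp ∨ a ∈ c.supp :=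
    fun c => (hcompAB c).symm
  -- factoring through H-twin-classes on vertices away from a,b
  have hfactor : ∀ t : Set V, (∀ x ∈ t, x ≠ a ∧ x ≠ b) →
      (twinClass G '' t).ncard ≤ (twinClass H '' t).ncard := by
    intro t ht
    refine ncard_image_le_of_factor (Set.toFinite _) (twinClass H) (twinClass G) ?_
    intro x hx y hy hxy
    have hmem : y ∈ twinClass H x := by
      rw [hxy]
      exact mem_twinClass_self H y
    rcases hmem with rfl | htw
    · rfl
    · have htwG := (twinPair_transfer hGH (ht x hx).1 (ht x hx).2 (ht y hy).1 (ht y hy).2).2 htw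
      exact (twinClass_eq_of_mem (mem_of_twinPair htwG)).symm
  -- per-component bound
  have hcompx : ∀ v : V, (twinClass H '' (H.connectedComponentMk v).supp).ncard ≤ ℓ :=
    fun v => classes_in_comp_le (by omega) _ (hL _)
  have hHbound : (twinClass H '' (Set.univ : Set V)).ncard ≤ 2 * ℓ := by
    have hcover : (Set.univ : Set V) ⊆
        (H.connectedComponentMk a).supp ∪ (H.connectedComponentMk b).supp := by
      intro v _
      rcases hcompAB (H.connectedComponentMk v) with h | h
      · exact Or.inl ((SimpleGraph.ConnectedComponent.mem_supp_iff _ _).2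
          ((SimpleGraph.ConnectedComponent.mem_supp_iff _ _).1 h).symm)
      · exact Or.inr ((SimpleGraph.ConnectedComponent.mem_supp_iff _ _).2
          ((SimpleGraph.ConnectedComponent.mem_supp_iff _ _).1 h).symm)
    calc (twinClass H '' (Set.univ : Set V)).ncard
        ≤ (twinClass H '' ((H.connectedComponentMk a).supp ∪
            (H.connectedComponentMk b).supp)).ncard :=
          Set.ncard_le_ncard (Set.image_mono hcover) (Set.toFinite _)
      _ = ((twinClass H '' (H.connectedComponentMk a).supp) ∪
            (twinClass H '' (H.connectedComponentMk b).supp)).ncard := by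
          rw [Set.image_union]
      _ ≤ (twinClass H '' (H.connectedComponentMk a).supp).ncard +
            (twinClass H '' (H.connectedComponentMk b).supp).ncard :=
          Set.ncard_union_le _ _
      _ ≤ ℓ + ℓ := add_le_add (hcompx a) (hcompx b)
      _ = 2 * ℓ := by ring
  have hQ : Qcount G ≤ 2 * ℓ + 2 := by
    have himg : twinClasses G = twinClass G '' (Set.univ : Set V) := by
      rw [Set.image_univ]; rfl
    have huniv : (Set.univ : Set V) = ({a, b} : Set V)ᶜ ∪ {a, b} :=
      (Set.compl_union_self _).symm
    have h1 : (twinClass G '' (({a, b} : Set V)ᶜ)).ncard ≤ 2 * ℓ := by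
      refine le_trans (hfactor _ ?_) ?_
      · intro x hx
        simp only [Set.mem_compl_iff, Set.mem_insert_iff, Set.mem_singleton_iff, not_or] at hx
        exact hx
      · exact le_trans (Set.ncard_le_ncard (Set.image_mono (Set.subset_univ _))
          (Set.toFinite _)) hHbound
    have h2 : (twinClass G '' ({a, b} : Set V)).ncard ≤ 2 := by
      rw [Set.image_pair]
      exact le_trans (Set.ncard_insert_le _ _) (by simp)
    have h3 : (twinClass G '' (Set.univ : Set V)).ncard ≤ 2 * ℓ + 2 := by
      rw [huniv, Set.image_union]
      exact le_trans (Set.ncard_union_le _ _) (by omega)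
    rw [Qcount, himg]
    exact h3
  have hP : Pcount G ≤ 2 * ℓ := by
    set P : Set (Set V) :=
      {C ∈ twinClasses G | 2 ≤ C.ncard ∧ ∀ x ∈ C, ∀ y ∈ C, x ≠ y → ¬ G.Adj x y} with hPdef
    show P.ncard ≤ 2 * ℓ
    set sP : Set V := {x : V | (x ≠ a ∧ x ≠ b) ∧ twinClass G x ∈ P} with hsPdef
    have hsub : ∀ C ∈ P, (∃ x ∈ C, x ≠ a ∧ x ≠ b) → C ∈ twinClass G '' sP := by
      rintro C hC ⟨x, hxC, hxa, hxb⟩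
      have hCx : C = twinClass G x := twinClasses_eq_of_mem hC.1 hxC
      exact ⟨x, ⟨⟨hxa, hxb⟩, by rw [← hCx]; exact hC⟩, hCx.symm⟩
    have himg1 : (twinClass G '' sP).ncard ≤ (twinClass H '' (Set.univ : Set V)).ncard := by
      refine le_trans (hfactor sP (fun x hx => hx.1)) ?_
      exact Set.ncard_le_ncard (Set.image_mono (Set.subset_univ _)) (Set.toFinite _)
    by_cases hcase : ∃ C ∈ P, a ∈ C ∧ b ∈ C
    · obtain ⟨C0, hC0, haC0, hbC0⟩ := hcase
      have hnadj : ¬ G.Adj a b := hC0.2.2 a haC0 b hbC0 hab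
      have hmk : H.connectedComponentMk a = H.connectedComponentMk b :=
        SimpleGraph.ConnectedComponent.sound (hflip.2 hnadj).reachable
      have hall := supp_univ hcompAB hmk
      have hbnd : (twinClass H '' (Set.univ : Set V)).ncard ≤ ℓ := by
        refine le_trans (Set.ncard_le_ncard (Set.image_mono (fun v _ => hall v))
          (Set.toFinite _)) (hcompx a)
      have hPsub : P ⊆ (twinClass G '' sP) ∪ {C0} := by
        intro C hC
        by_cases hx : ∃ x ∈ C, x ≠ a ∧ x ≠ b
        · exact Or.inl (hsub C hC hx)
        · right
          push_neg at hx
          have h2C : 2 ≤ C.ncard := hC.2.1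
          obtain ⟨u, huC, hub⟩ := Set.exists_ne_of_one_lt_ncard (show 1 < C.ncard by omega) b
          have hua : u = a := by
            by_contra h'
            exact hub (hx u huC h')
          have haC : a ∈ C := hua ▸ huC
          have e1 : C = twinClass G a := twinClasses_eq_of_mem hC.1 haC
          have e2 : C0 = twinClass G a := twinClasses_eq_of_mem hC0.1 haC0
          simp only [Set.mem_singleton_iff]
          rw [e1, e2]
      calc P.ncard ≤ ((twinClass G '' sP) ∪ {C0}).ncard :=
            Set.ncard_le_ncard hPsub (Set.toFinite _)
        _ ≤ (twinClass G '' sP).ncard + ({C0} : Set (Set V)).ncard := Set.ncard_union_le _ _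
        _ ≤ ℓ + 1 := add_le_add (le_trans himg1 hbnd) (by simp)
        _ ≤ 2 * ℓ := by omega
    · have hPsub : P ⊆ twinClass G '' sP := by
        intro C hC
        by_cases hx : ∃ x ∈ C, x ≠ a ∧ x ≠ b
        · exact hsub C hC hx
        · exfalso
          push_neg at hx
          have h2C : 2 ≤ C.ncard := hC.2.1
          obtain ⟨u, huC, hub⟩ := Set.exists_ne_of_one_lt_ncard (show 1 < C.ncard by omega) b
          obtain ⟨v, hvC, hva⟩ := Set.exists_ne_of_one_lt_ncard (by omega : 1 < C.ncard) a
          have hua : u = a := by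
            by_contra h'
            exact hub (hx u huC h')
          have hvb : v = b := hx v hvC hva
          exact hcase ⟨C, hC, hua ▸ huC, hvb ▸ hvC⟩
      calc P.ncard ≤ (twinClass G '' sP).ncard := Set.ncard_le_ncard hPsub (Set.toFinite _)
        _ ≤ 2 * ℓ := le_trans himg1 hHbound
  have hS : Scount G ≤ 2 := by
    set S : Set (Set V) :=
      {C ∈ twinClasses G | 2 ≤ C.ncard ∧ ∀ x ∈ C, ∀ y ∈ C, x ≠ y → G.Adj x y} with hSdef
    show S.ncard ≤ 2
    have hunify : ∀ C1 C2 : Set V, C1 ∈ S → C2 ∈ S →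
        ∀ x1 y1 x2 y2 : V, x1 ∈ C1 → y1 ∈ C1 → x2 ∈ C2 → y2 ∈ C2 →
        x1 ≠ a → x1 ≠ b → y1 ≠ a → y1 ≠ b → x2 ≠ a → x2 ≠ b → y2 ≠ a → y2 ≠ b →
        x1 ≠ y1 → x2 ≠ y2 →
        H.connectedComponentMk x1 = H.connectedComponentMk x2 → C1 = C2 := by
      intro C1 C2 hC1 hC2 x1 y1 x2 y2 hx1 hy1 hx2 hy2 hx1a hx1b hy1a hy1b hx2a hx2b
        hy2a hy2b hne1 hne2 hmk12
      have e1 : C1 = twinClass G x1 := twinClasses_eq_of_mem hC1.1 hx1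
      have e2 : C2 = twinClass G x2 := twinClasses_eq_of_mem hC2.1 hx2
      have tw1G : IsTwinPair G x1 y1 := by
        have hm : y1 ∈ twinClass G x1 := e1 ▸ hy1
        rcases hm with rfl | h
        · exact absurd rfl hne1
        · exact h
      have tw2G : IsTwinPair G x2 y2 := by
        have hm : y2 ∈ twinClass G x2 := e2 ▸ hy2
        rcases hm with rfl | h
        · exact absurd rfl hne2
        · exact h
      have tw1 : IsTwinPair H x1 y1 := (twinPair_transfer hGH hx1a hx1b hy1a hy1b).1 tw1G
      have tw2 : IsTwinPair H x2 y2 := (twinPair_transfer hGH hx2a hx2b hy2a hy2b).1 tw2G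
      have ad1 : H.Adj x1 y1 :=
        (hGH x1 y1 (sym2_ne_of_notmem hx1a hx1b)).1 (hC1.2.2 x1 hx1 y1 hy1 hne1)
      have ad2 : H.Adj x2 y2 :=
        (hGH x2 y2 (sym2_ne_of_notmem hx2a hx2b)).1 (hC2.2.2 x2 hx2 y2 hy2 hne2)
      have hcls := true_class_unique hL tw1 ad1 tw2 ad2 hmk12
      have hx2mem : x2 ∈ twinClass H x1 := by
        rw [hcls]
        exact mem_twinClass_self H x2
      rcases hx2mem with heq | htw
      · rw [e1, e2, heq]
      · have htwG := (twinPair_transfer hGH hx1a hx1b hx2a hx2b).2 htw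
        rw [e1, e2, twinClass_eq_of_mem (mem_of_twinPair htwG)]
    set F2 : H.ConnectedComponent → Set (Set V) := fun k =>
      {C | C ∈ S ∧ ∃ x y : V, x ∈ C ∧ y ∈ C ∧ x ≠ a ∧ x ≠ b ∧ y ≠ a ∧ y ≠ b ∧ x ≠ y ∧
        H.connectedComponentMk x = k} with hF2def
    have hF2card : ∀ k, (F2 k).ncard ≤ 1 := by
      intro k
      refine (Set.ncard_le_one (Set.toFinite _)).2 ?_
      rintro C1 ⟨hC1, x1, y1, hx1, hy1, hx1a, hx1b, hy1a, hy1b, hne1, hk1⟩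
        C2 ⟨hC2, x2, y2, hx2, hy2, hx2a, hx2b, hy2a, hy2b, hne2, hk2⟩
      exact hunify C1 C2 hC1 hC2 x1 y1 x2 y2 hx1 hy1 hx2 hy2 hx1a hx1b hy1a hy1b
        hx2a hx2b hy2a hy2b hne1 hne2 (hk1.trans hk2.symm)
    have hE : ∀ C ∈ S, a ∈ C →
        H.connectedComponentMk a = H.connectedComponentMk b ∧
          (b ∈ C ∨ (¬ G.Adj a b ∧ ∃ x, x ∈ C ∧ x ≠ a ∧ x ≠ b ∧ IsTwinPair G x a ∧
            G.Adj x a ∧ ¬ G.Adj b x)) :=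
      fun C hC haC => E1 hab hGH hflip hG hL hcompAB hC.1 hC.2.1 hC.2.2 haC
    have hE' : ∀ C ∈ S, b ∈ C →
        H.connectedComponentMk b = H.connectedComponentMk a ∧
          (a ∈ C ∨ (¬ G.Adj b a ∧ ∃ x, x ∈ C ∧ x ≠ b ∧ x ≠ a ∧ IsTwinPair G x b ∧
            G.Adj x b ∧ ¬ G.Adj a x)) :=
      fun C hC hbC => E1 hab.symm hGH' hflip' hG hL hcompAB' hC.1 hC.2.1 hC.2.2 hbC
    have huniq2 : ∀ C ∈ S, a ∈ C → ∀ C' ∈ S, b ∈ C' → C = C' := by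
      intro C hC haC C' hC' hbC'
      by_contra hne
      rcases (hE C hC haC).2 with hbC | ⟨hnadj, x, hxC, hxa, hxb, htwx, hadjx, hnbx⟩
      · exact hne ((twinClasses_eq_of_mem hC.1 hbC).trans
          (twinClasses_eq_of_mem hC'.1 hbC').symm)
      · rcases (hE' C' hC' hbC').2 with haC' | ⟨hnadj', y, hyC', hyb, hya, htwy, hadjy, hnay⟩
        · exact hne ((twinClasses_eq_of_mem hC.1 haC).trans
            (twinClasses_eq_of_mem hC'.1 haC').symm)
        · have hxy : x ≠ y := by
            rintro rfl
            exact hne ((twinClasses_eq_of_mem hC.1 hxC).trans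
              (twinClasses_eq_of_mem hC'.1 hyC').symm)
          exact no_two_pendant hGH hflip hL hcompAB hxa hxb hya hyb hxy hnadj htwx hadjx
            hnbx htwy hadjy hnay
    have haorbf : ∀ C ∈ S,
        (¬ ∃ x y : V, x ∈ C ∧ y ∈ C ∧ x ≠ a ∧ x ≠ b ∧ y ≠ a ∧ y ≠ b ∧ x ≠ y) →
        a ∈ C ∨ b ∈ C := by
      intro C hC hno
      have h2C : 2 ≤ C.ncard := hC.2.1
      obtain ⟨u, hu, v, hv, huv⟩ := (Set.one_lt_ncard (Set.toFinite _)).1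
        (show 1 < C.ncard by omega)
      by_cases hu' : u = a ∨ u = b
      · rcases hu' with rfl | rfl
        · exact Or.inl hu
        · exact Or.inr hu
      · push_neg at hu'
        by_cases hv' : v = a ∨ v = b
        · rcases hv' with rfl | rfl
          · exact Or.inl hv
          · exact Or.inr hv
        · push_neg at hv'
          exact absurd ⟨u, v, hu, hv, hu'.1, hu'.2, hv'.1, hv'.2, huv⟩ hno
    by_cases hScase : ∃ C ∈ S,
        ¬ ∃ x y : V, x ∈ C ∧ y ∈ C ∧ x ≠ a ∧ x ≠ b ∧ y ≠ a ∧ y ≠ b ∧ x ≠ y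
    · obtain ⟨C0, hC0, hC0no⟩ := hScase
      have hmk : H.connectedComponentMk a = H.connectedComponentMk b := by
        rcases haorbf C0 hC0 hC0no with h | h
        · exact (hE C0 hC0 h).1
        · exact (hE' C0 hC0 h).1.symm
      have hall := supp_univ hcompAB hmk
      have huniq : ∀ C ∈ S,
          (¬ ∃ x y : V, x ∈ C ∧ y ∈ C ∧ x ≠ a ∧ x ≠ b ∧ y ≠ a ∧ y ≠ b ∧ x ≠ y) → C = C0 := by
        intro C hC hno
        rcases haorbf C hC hno with h1 | h1 <;> rcases haorbf C0 hC0 hC0no with h2 | h2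
        · exact (twinClasses_eq_of_mem hC.1 h1).trans (twinClasses_eq_of_mem hC0.1 h2).symm
        · exact huniq2 C hC h1 C0 hC0 h2
        · exact (huniq2 C0 hC0 h2 C hC h1).symm
        · exact (twinClasses_eq_of_mem hC.1 h1).trans (twinClasses_eq_of_mem hC0.1 h2).symm
      have hSsub : S ⊆ F2 (H.connectedComponentMk a) ∪ {C0} := by
        intro C hC
        by_cases h2 : ∃ x y : V, x ∈ C ∧ y ∈ C ∧ x ≠ a ∧ x ≠ b ∧ y ≠ a ∧ y ≠ b ∧ x ≠ y
        · obtain ⟨x, y, hx, hy, hxa, hxb, hya, hyb, hxy⟩ := h2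
          exact Or.inl ⟨hC, x, y, hx, hy, hxa, hxb, hya, hyb, hxy,
            (SimpleGraph.ConnectedComponent.mem_supp_iff _ _).1 (hall x)⟩
        · exact Or.inr (Set.mem_singleton_iff.2 (huniq C hC h2))
      calc S.ncard ≤ (F2 (H.connectedComponentMk a) ∪ {C0}).ncard :=
            Set.ncard_le_ncard hSsub (Set.toFinite _)
        _ ≤ (F2 (H.connectedComponentMk a)).ncard + ({C0} : Set (Set V)).ncard :=
            Set.ncard_union_le _ _
        _ ≤ 1 + 1 := add_le_add (hF2card _) (by simp)
        _ ≤ 2 := by omega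
    · push_neg at hScase
      have hSsub : S ⊆ F2 (H.connectedComponentMk a) ∪ F2 (H.connectedComponentMk b) := by
        intro C hC
        obtain ⟨x, y, hx, hy, hxa, hxb, hya, hyb, hxy⟩ := hScase C hC
        rcases hcompAB (H.connectedComponentMk x) with h | h
        · exact Or.inl ⟨hC, x, y, hx, hy, hxa, hxb, hya, hyb, hxy,
            ((SimpleGraph.ConnectedComponent.mem_supp_iff _ _).1 h).symm⟩
        · exact Or.inr ⟨hC, x, y, hx, hy, hxa, hxb, hya, hyb, hxy,
            ((SimpleGraph.ConnectedComponent.mem_supp_iff _ _).1 h).symm⟩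
      calc S.ncard ≤ (F2 (H.connectedComponentMk a) ∪ F2 (H.connectedComponentMk b)).ncard :=
            Set.ncard_le_ncard hSsub (Set.toFinite _)
        _ ≤ (F2 (H.connectedComponentMk a)).ncard + (F2 (H.connectedComponentMk b)).ncard :=
            Set.ncard_union_le _ _
        _ ≤ 2 := by
            have := hF2card (H.connectedComponentMk a)
            have := hF2card (H.connectedComponentMk b)
            omega
  exact ⟨hQ, hP, hS⟩
end
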